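/- Let X, Y be real random variables on a probability space (Ω, ℱ, P) with E[|Y|] < ∞, and let α ∈ (0,1). Set p_α = (P[−X ≤ q_α(−X)] − α)/P[−X = q_α(−X)] if P[−X = q_α(−X)] > 0, and p_α = 0 otherwise. Suppose J is a {0,1}-valued random variable with P[J = 1] = p_α that is independent of the pair (X,Y), and define I = 1 on the event {−X > q_α(−X)} ∪ ({−X = q_α(−X)} ∩ {J = 1}) and I = 0 otherwise. Let g : ℝ → ℝ be any Borel measurable function such that g∘X is a version of the conditional expectation of Y given the σ-algebra generated by X. Then P[I = 1] = 1 − α and E[Y | I = 1] = (1−α)^{−1} ∫_α^1 g(−VaR_u(X)) du, the integral being the Lebesgue integral over u ∈ (α,1). -/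

import Mathlib

open MeasureTheory Set Filter

/-- The `α`-quantile of a real random variable `X`:
`q_α(X) = inf {x ∈ ℝ : P[X ≤ x] ≥ α}`. -/
noncomputable def quantile {Ω : Type*} [MeasurableSpace Ω] (μ : Measure Ω)
    (X : Ω → ℝ) (α : ℝ) : ℝ :=
  sInf {x : ℝ | ENNReal.ofReal α ≤ μ {ω | X ω ≤ x}}

/-- Value-at-risk at level `α`: `VaR_α(X) = q_α(-X)`. -/
noncomputable def VaR {Ω : Type*} [MeasurableSpace Ω] (μ : Measure Ω)
    (X : Ω → ℝ) (α : ℝ) : ℝ :=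
  quantile μ (fun ω => - X ω) α

section Aux

variable {Ω : Type*} [MeasurableSpace Ω] {μ : Measure Ω} [IsProbabilityMeasure μ]
  {Z : Ω → ℝ} {u : ℝ}

lemma qset_mono (μ : Measure Ω) (Z : Ω → ℝ) {u x y : ℝ} (hxy : x ≤ y)
    (hx : ENNReal.ofReal u ≤ μ {ω | Z ω ≤ x}) :
    ENNReal.ofReal u ≤ μ {ω | Z ω ≤ y} :=
  hx.trans (measure_mono fun ω hω => le_trans hω hxy)

lemma qset_nonempty (hu1 : u < 1) :
    {x : ℝ | ENNReal.ofReal u ≤ μ {ω | Z ω ≤ x}}.Nonempty := by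
  have hmono : Monotone fun n : ℕ => {ω | Z ω ≤ (n : ℝ)} := by
    intro n m hnm ω hω
    simp only [mem_setOf_eq] at hω ⊢
    have : (n : ℝ) ≤ (m : ℝ) := by exact_mod_cast hnm
    linarith
  have hU : (⋃ n : ℕ, {ω | Z ω ≤ (n : ℝ)}) = univ := by
    ext ω
    simp only [mem_iUnion, mem_univ, iff_true, mem_setOf_eq]
    exact exists_nat_ge (Z ω)
  have ht : Tendsto (μ ∘ fun n : ℕ => {ω | Z ω ≤ (n : ℝ)}) atTop (nhds 1) := by
    have := tendsto_measure_iUnion_atTop (μ := μ) hmono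
    rwa [hU, measure_univ] at this
  have hlt : ENNReal.ofReal u < 1 := ENNReal.ofReal_lt_one.2 hu1
  obtain ⟨n, hn⟩ := (ht.eventually (eventually_ge_nhds hlt)).exists
  exact ⟨(n : ℝ), hn⟩

lemma qset_bddBelow (hZ : Measurable Z) (hu0 : 0 < u) :
    BddBelow {x : ℝ | ENNReal.ofReal u ≤ μ {ω | Z ω ≤ x}} := by
  have hanti : Antitone fun n : ℕ => {ω | Z ω ≤ -(n : ℝ)} := by
    intro n m hnm ω hω
    simp only [mem_setOf_eq] at hω ⊢
    have : (n : ℝ) ≤ (m : ℝ) := by exact_mod_cast hnm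
    linarith
  have hI : (⋂ n : ℕ, {ω | Z ω ≤ -(n : ℝ)}) = ∅ := by
    ext ω
    simp only [mem_iInter, mem_empty_iff_false, iff_false, not_forall, mem_setOf_eq, not_le]
    obtain ⟨n, hn⟩ := exists_nat_gt (-Z ω)
    exact ⟨n, by linarith⟩
  have ht : Tendsto (μ ∘ fun n : ℕ => {ω | Z ω ≤ -(n : ℝ)}) atTop (nhds 0) := by
    have := tendsto_measure_iInter_atTop (μ := μ) (s := fun n : ℕ => {ω | Z ω ≤ -(n : ℝ)})
      (fun n => (hZ measurableSet_Iic).nullMeasurableSet) hanti ⟨0, measure_ne_top _ _⟩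
    rwa [hI, measure_empty] at this
  have h0 : (0 : ENNReal) < ENNReal.ofReal u := ENNReal.ofReal_pos.2 hu0
  obtain ⟨n, hn⟩ := (ht.eventually (eventually_lt_nhds h0)).exists
  refine ⟨-(n : ℝ), fun s hs => ?_⟩
  by_contra hlt
  push_neg at hlt
  exact absurd (qset_mono μ Z hlt.le hs) (not_le.2 hn)

lemma le_measure_quantile (hZ : Measurable Z) (hu0 : 0 < u) (hu1 : u < 1) :
    ENNReal.ofReal u ≤ μ {ω | Z ω ≤ quantile μ Z u} := by
  have hne := qset_nonempty (μ := μ) (Z := Z) hu1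
  have hbdd := qset_bddBelow (μ := μ) hZ hu0
  have hmem : ∀ n : ℕ, ENNReal.ofReal u ≤ μ {ω | Z ω ≤ quantile μ Z u + 1 / (n + 1)} := by
    intro n
    have hpos : (0 : ℝ) < 1 / ((n : ℝ) + 1) := by positivity
    have hlt : sInf {x : ℝ | ENNReal.ofReal u ≤ μ {ω | Z ω ≤ x}}
        < quantile μ Z u + 1 / (n + 1) := by
      rw [quantile] at *
      linarith
    obtain ⟨s, hsS, hslt⟩ := (csInf_lt_iff hbdd hne).1 hlt
    exact qset_mono μ Z hslt.le hsS
  have hInter : {ω | Z ω ≤ quantile μ Z u}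
      = ⋂ n : ℕ, {ω | Z ω ≤ quantile μ Z u + 1 / (n + 1)} := by
    ext ω
    simp only [mem_iInter, mem_setOf_eq]
    constructor
    · intro h n
      have : (0 : ℝ) ≤ 1 / ((n : ℝ) + 1) := by positivity
      linarith
    · intro h
      by_contra hgt
      push_neg at hgt
      obtain ⟨n, hn⟩ := exists_nat_one_div_lt (sub_pos.2 hgt)
      have := h n
      linarith
  have hanti : Antitone fun n : ℕ => {ω | Z ω ≤ quantile μ Z u + 1 / (n + 1)} := by
    intro n m hnm ω hω
    have h1 : (1 : ℝ) / ((m : ℝ) + 1) ≤ 1 / ((n : ℝ) + 1) := by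
      apply one_div_le_one_div_of_le (by positivity)
      have : (n : ℝ) ≤ (m : ℝ) := by exact_mod_cast hnm
      linarith
    simp only [mem_setOf_eq] at hω ⊢
    linarith
  have ht := tendsto_measure_iInter_atTop (μ := μ)
    (s := fun n : ℕ => {ω | Z ω ≤ quantile μ Z u + 1 / (n + 1)})
    (fun n => (hZ measurableSet_Iic).nullMeasurableSet) hanti ⟨0, measure_ne_top _ _⟩
  rw [hInter]
  exact ge_of_tendsto ht (Eventually.of_forall hmem)

lemma quantile_le_iff (hZ : Measurable Z) (hu0 : 0 < u) (hu1 : u < 1) {x : ℝ} :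
    quantile μ Z u ≤ x ↔ ENNReal.ofReal u ≤ μ {ω | Z ω ≤ x} := by
  constructor
  · intro h
    exact qset_mono μ Z h (le_measure_quantile hZ hu0 hu1)
  · intro h
    exact csInf_le (qset_bddBelow hZ hu0) h

lemma measure_lt_quantile_le (hZ : Measurable Z) (hu0 : 0 < u) :
    μ {ω | Z ω < quantile μ Z u} ≤ ENNReal.ofReal u := by
  have hmono : Monotone fun n : ℕ => {ω | Z ω ≤ quantile μ Z u - 1 / (n + 1)} := by
    intro n m hnm ω hω
    have h1 : (1 : ℝ) / ((m : ℝ) + 1) ≤ 1 / ((n : ℝ) + 1) := by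
      apply one_div_le_one_div_of_le (by positivity)
      have : (n : ℝ) ≤ (m : ℝ) := by exact_mod_cast hnm
      linarith
    simp only [mem_setOf_eq] at hω ⊢
    linarith
  have hU : {ω | Z ω < quantile μ Z u}
      = ⋃ n : ℕ, {ω | Z ω ≤ quantile μ Z u - 1 / (n + 1)} := by
    ext ω
    simp only [mem_iUnion, mem_setOf_eq]
    constructor
    · intro h
      obtain ⟨n, hn⟩ := exists_nat_one_div_lt (sub_pos.2 h)
      exact ⟨n, by linarith⟩
    · rintro ⟨n, hn⟩
      have : (0 : ℝ) < 1 / ((n : ℝ) + 1) := by positivity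
      linarith
  have ht := tendsto_measure_iUnion_atTop (μ := μ) hmono
  rw [hU]
  refine le_of_tendsto ht (Eventually.of_forall fun n => ?_)
  have hnot : quantile μ Z u - 1 / (n + 1) ∉
      {x : ℝ | ENNReal.ofReal u ≤ μ {ω | Z ω ≤ x}} := by
    intro hmem
    have hle := csInf_le (qset_bddBelow (μ := μ) hZ hu0) hmem
    have hpos : (0 : ℝ) < 1 / ((n : ℝ) + 1) := by positivity
    rw [quantile] at hle
    linarith
  simp only [mem_setOf_eq, not_le] at hnot
  exact hnot.le

lemma quantile_monotoneOn (hZ : Measurable Z) :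
    MonotoneOn (fun u => quantile μ Z u) (Ioo (0 : ℝ) 1) := by
  intro u hu v hv huv
  refine csInf_le_csInf (qset_bddBelow hZ hu.1) (qset_nonempty hv.2) ?_
  intro x hx
  exact le_trans (ENNReal.ofReal_le_ofReal huv) hx

lemma quantile_aemeasurable (hZ : Measurable Z) :
    AEMeasurable (fun u => quantile μ Z u) (volume.restrict (Ioo (0 : ℝ) 1)) :=
  aemeasurable_restrict_of_monotoneOn measurableSet_Ioo (quantile_monotoneOn hZ)

lemma quantile_map (hZ : Measurable Z) :
    (volume.restrict (Ioo (0 : ℝ) 1)).map (fun u => quantile μ Z u) = μ.map Z := by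
  have hQae := quantile_aemeasurable (μ := μ) hZ
  haveI h1' : IsProbabilityMeasure (volume.restrict (Ioo (0 : ℝ) 1)) :=
    ⟨by simp [Real.volume_Ioo]⟩
  haveI h2' : IsProbabilityMeasure
      ((volume.restrict (Ioo (0 : ℝ) 1)).map fun u => quantile μ Z u) :=
    Measure.isProbabilityMeasure_map hQae
  haveI h3' : IsProbabilityMeasure (μ.map Z) :=
    Measure.isProbabilityMeasure_map hZ.aemeasurable
  refine Measure.ext_of_Iic _ _ fun x => ?_
  rw [Measure.map_apply_of_aemeasurable hQae measurableSet_Iic,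
      Measure.map_apply hZ measurableSet_Iic,
      Measure.restrict_apply' measurableSet_Ioo]
  set F := (μ {ω | Z ω ≤ x}).toReal with hF
  have hFnn : (0 : ℝ) ≤ F := ENNReal.toReal_nonneg
  have hF1 : F ≤ 1 := by
    have h1 := prob_le_one (μ := μ) (s := {ω | Z ω ≤ x})
    have := ENNReal.toReal_mono (by simp) h1
    simpa using this
  have hset : (fun u => quantile μ Z u) ⁻¹' Iic x ∩ Ioo 0 1 = Iic F ∩ Ioo 0 1 := by
    ext u
    simp only [mem_inter_iff, mem_preimage, mem_Iic, mem_Ioo, and_congr_left_iff]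
    intro hu
    rw [quantile_le_iff hZ hu.1 hu.2,
      ENNReal.ofReal_le_iff_le_toReal (measure_ne_top μ _)]
  have hZx : Z ⁻¹' Iic x = {ω | Z ω ≤ x} := rfl
  rw [hset, hZx, ← ENNReal.ofReal_toReal (measure_ne_top μ {ω | Z ω ≤ x}), ← hF]
  rcases lt_or_ge F 1 with h1 | h1
  · have heq : Iic F ∩ Ioo 0 1 = Ioc 0 F := by
      ext u
      simp only [mem_inter_iff, mem_Iic, mem_Ioo, mem_Ioc]
      constructor
      · rintro ⟨h, h0, _⟩; exact ⟨h0, h⟩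
      · rintro ⟨h0, h⟩; exact ⟨h, h0, lt_of_le_of_lt h h1⟩
    rw [heq, Real.volume_Ioc, sub_zero]
  · have hF1' : F = 1 := le_antisymm hF1 h1
    have heq : Iic F ∩ Ioo 0 1 = Ioo 0 1 := by
      rw [inter_eq_self_of_subset_right]
      intro u hu
      exact le_of_lt (hF1' ▸ hu.2)
    rw [heq, Real.volume_Ioo, sub_zero, hF1']

end Aux

/-- Worst-case interpretation of the tail average: with `I = 1` on
`{-X > q_α(-X)} ∪ ({-X = q_α(-X)} ∩ {J = 1})` for a randomization `J` independent of
`(X,Y)` with `P[J = 1] = p_α`, one has `P[I = 1] = 1 - α` and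
`E[Y | I = 1] = (1-α)⁻¹ ∫_α^1 E[Y | X = -VaR_u(X)] du`. -/
theorem conditional_expectation_given_worst_case {Ω : Type*} [MeasurableSpace Ω]
    (μ : Measure Ω) [IsProbabilityMeasure μ]
    (X Y : Ω → ℝ) (hX : Measurable X) (hY : Measurable Y) (hYint : Integrable Y μ)
    (α : ℝ) (hα : α ∈ Set.Ioo (0 : ℝ) 1)
    (q : ℝ) (hq : q = quantile μ (fun ω => - X ω) α)
    (pα : ℝ)
    (hpα : pα = if μ {ω | - X ω = q} ≠ 0
      then ((μ {ω | - X ω ≤ q}).toReal - α) / (μ {ω | - X ω = q}).toReal else 0)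
    (J : Ω → ℝ) (hJ : Measurable J) (hJ01 : ∀ ω, J ω = 0 ∨ J ω = 1)
    (hJ1 : μ {ω | J ω = 1} = ENNReal.ofReal pα)
    (hind : ProbabilityTheory.IndepFun J (fun ω => (X ω, Y ω)) μ)
    (g : ℝ → ℝ) (hg : Measurable g)
    (hver : (fun ω => g (X ω)) =ᵐ[μ] μ[Y | MeasurableSpace.comap X Real.measurableSpace]) :
    μ ({ω | q < - X ω} ∪ ({ω | - X ω = q} ∩ {ω | J ω = 1})) = ENNReal.ofReal (1 - α) ∧
      (∫ ω in {ω | q < - X ω} ∪ ({ω | - X ω = q} ∩ {ω | J ω = 1}), Y ω ∂μ)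
          / (μ ({ω | q < - X ω} ∪ ({ω | - X ω = q} ∩ {ω | J ω = 1}))).toReal
        = (1 - α)⁻¹ * ∫ u in Set.Ioo α 1, g (- VaR μ X u) := by
  obtain ⟨hα0, hα1⟩ := hα
  set A1 : Set Ω := {ω | q < - X ω} with hA1def
  set A2 : Set Ω := {ω | - X ω = q} with hA2def
  set B : Set Ω := {ω | J ω = 1} with hBdef
  have hmA1 : MeasurableSet A1 := measurableSet_lt measurable_const hX.neg
  have hmA2 : MeasurableSet A2 := measurableSet_eq_fun hX.neg measurable_const
  have hmB : MeasurableSet B := measurableSet_eq_fun hJ measurable_const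
  have hmLt : MeasurableSet {ω | - X ω < q} := measurableSet_lt hX.neg measurable_const
  have hmLe : MeasurableSet {ω | - X ω ≤ q} := measurableSet_le hX.neg measurable_const
  -- CDF facts
  have hFge : ENNReal.ofReal α ≤ μ {ω | - X ω ≤ q} := by
    have h := (quantile_le_iff (μ := μ) (Z := fun ω => - X ω) hX.neg hα0 hα1 (x := q)).1
      (le_of_eq hq.symm)
    exact h
  have hFlt : μ {ω | - X ω < q} ≤ ENNReal.ofReal α := by
    have h := measure_lt_quantile_le (μ := μ) (Z := fun ω => - X ω) hX.neg hα0
    rw [hq]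
    exact h
  set F := (μ {ω | - X ω ≤ q}).toReal with hFdef
  have hFofReal : μ {ω | - X ω ≤ q} = ENNReal.ofReal F :=
    (ENNReal.ofReal_toReal (measure_ne_top _ _)).symm
  have hαF : α ≤ F := by
    have := ENNReal.toReal_mono (measure_ne_top μ _) hFge
    rwa [ENNReal.toReal_ofReal hα0.le] at this
  have hF1 : F ≤ 1 := by
    have h1 := prob_le_one (μ := μ) (s := {ω | - X ω ≤ q})
    have := ENNReal.toReal_mono (by simp) h1
    simpa using this
  have hsplit : {ω | - X ω ≤ q} = {ω | - X ω < q} ∪ A2 := by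
    ext ω
    simp only [hA2def, mem_setOf_eq, mem_union, le_iff_lt_or_eq]
  have hdisj0 : Disjoint {ω | - X ω < q} A2 := by
    rw [disjoint_left]
    intro ω h1 h2
    rw [hA2def, mem_setOf_eq] at h2
    rw [mem_setOf_eq] at h1
    exact absurd h2 (ne_of_lt h1)
  have hFa : μ {ω | - X ω ≤ q} = μ {ω | - X ω < q} + μ A2 := by
    rw [hsplit, measure_union hdisj0 hmA2]
  -- the key identity pα * μ(A2) = F - α
  have hkey : pα * (μ A2).toReal = F - α := by
    by_cases hA2z : μ A2 = 0
    · have hpα0 : pα = 0 := by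
        rw [hpα, if_neg (by simp [hA2z])]
      have hFα : μ {ω | - X ω ≤ q} = ENNReal.ofReal α := by
        have hle : μ {ω | - X ω ≤ q} ≤ ENNReal.ofReal α := by
          rw [hFa, hA2z, add_zero]; exact hFlt
        exact le_antisymm hle hFge
      have : F = α := by rw [hFdef, hFα, ENNReal.toReal_ofReal hα0.le]
      rw [hpα0, this, zero_mul, sub_self]
    · have ha0 : 0 < (μ A2).toReal := ENNReal.toReal_pos hA2z (measure_ne_top _ _)
      rw [hpα, if_pos hA2z]
      field_simp
  have hpα_nonneg : 0 ≤ pα := by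
    by_cases hA2z : μ A2 = 0
    · rw [hpα, if_neg (by simp [hA2z])]
    · rw [hpα, if_pos hA2z]
      exact div_nonneg (sub_nonneg.2 hαF) ENNReal.toReal_nonneg
  -- independence: X and J
  have hindX : ProbabilityTheory.IndepFun J X μ :=
    hind.comp measurable_id measurable_fst
  have hA2X : A2 = X ⁻¹' {-q} := by
    ext ω
    simp only [hA2def, mem_setOf_eq, mem_preimage, mem_singleton_iff, neg_eq_iff_eq_neg]
  have hBX : B = J ⁻¹' {1} := rfl
  have hA2B : μ (A2 ∩ B) = ENNReal.ofReal (F - α) := by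
    have h := hindX.measure_inter_preimage_eq_mul {1} {-q}
      (measurableSet_singleton _) (measurableSet_singleton _)
    rw [inter_comm, hBX, hA2X]
    rw [h, ← hBX, ← hA2X, hJ1]
    rw [← ENNReal.ofReal_toReal (measure_ne_top μ A2), ← ENNReal.ofReal_mul hpα_nonneg,
      hkey]
  have hA1μ : μ A1 = ENNReal.ofReal (1 - F) := by
    have hcompl : A1 = {ω | - X ω ≤ q}ᶜ := by
      ext ω
      simp only [hA1def, mem_setOf_eq, mem_compl_iff, not_le]
    rw [hcompl, prob_compl_eq_one_sub hmLe, hFofReal,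
      ENNReal.ofReal_sub 1 ENNReal.toReal_nonneg, ENNReal.ofReal_one]
  have hdisjE : Disjoint A1 (A2 ∩ B) := by
    rw [disjoint_left]
    intro ω h1 h2
    rw [hA1def, mem_setOf_eq] at h1
    rw [mem_inter_iff, hA2def, mem_setOf_eq] at h2
    exact absurd h2.1 (ne_of_gt h1)
  -- Part 1
  have hP1 : μ (A1 ∪ A2 ∩ B) = ENNReal.ofReal (1 - α) := by
    rw [measure_union hdisjE (hmA2.inter hmB), hA1μ, hA2B,
      ← ENNReal.ofReal_add (by linarith) (by linarith)]
    congr 1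
    ring
  -- conditional expectation facts
  have hm : MeasurableSpace.comap X Real.measurableSpace ≤ ‹MeasurableSpace Ω› :=
    hX.comap_le
  haveI : SigmaFinite (μ.trim hm) := inferInstance
  have hcond : ∀ s : Set ℝ, MeasurableSet s →
      ∫ ω in X ⁻¹' s, Y ω ∂μ = ∫ ω in X ⁻¹' s, g (X ω) ∂μ := by
    intro s hs
    have hms : MeasurableSet[MeasurableSpace.comap X Real.measurableSpace] (X ⁻¹' s) :=
      ⟨s, hs, rfl⟩
    rw [← setIntegral_condExp hm hYint hms]
    exact (setIntegral_congr_ae (hm _ hms) (hver.mono fun ω hω _ => hω)).symm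
  have hgXint : Integrable (fun ω => g (X ω)) μ := integrable_condExp.congr hver.symm
  have hA1X : A1 = X ⁻¹' (Iio (-q)) := by
    ext ω
    simp only [hA1def, mem_setOf_eq, mem_preimage, mem_Iio, lt_neg]
  have hIntA1 : ∫ ω in A1, Y ω ∂μ = ∫ ω in A1, g (X ω) ∂μ := by
    rw [hA1X]
    exact hcond _ measurableSet_Iio
  have hIntA2 : ∫ ω in A2, Y ω ∂μ = g (-q) * (μ A2).toReal := by
    rw [hA2X, hcond _ (measurableSet_singleton _)]
    have hcg : ∀ ω ∈ X ⁻¹' ({-q} : Set ℝ), g (X ω) = g (-q) := by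
      intro ω hω
      rw [show X ω = -q from hω]
    rw [setIntegral_congr_fun (hX (measurableSet_singleton _)) hcg, setIntegral_const, measureReal_def,
      smul_eq_mul, mul_comm]
  -- independence for the randomized part
  have hφmeas : Measurable fun t : ℝ => ({1} : Set ℝ).indicator (fun _ => (1 : ℝ)) t :=
    measurable_const.indicator (measurableSet_singleton 1)
  have hψmeas : Measurable fun p : ℝ × ℝ =>
      ({-q} : Set ℝ).indicator (fun _ => (1 : ℝ)) p.1 * p.2 :=
    ((measurable_const.indicator (measurableSet_singleton _)).comp measurable_fst).mul
      measurable_snd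
  have hind2 : ProbabilityTheory.IndepFun
      (fun ω => ({1} : Set ℝ).indicator (fun _ => (1 : ℝ)) (J ω))
      (fun ω => ({-q} : Set ℝ).indicator (fun _ => (1 : ℝ)) (X ω) * Y ω) μ :=
    hind.comp hφmeas hψmeas
  have hφJ : (fun ω => ({1} : Set ℝ).indicator (fun _ => (1 : ℝ)) (J ω))
      = B.indicator fun _ => (1 : ℝ) := by
    funext ω
    by_cases h : J ω = 1 <;>
      simp [Set.indicator_apply, h, hBdef]
  have hψW : (fun ω => ({-q} : Set ℝ).indicator (fun _ => (1 : ℝ)) (X ω) * Y ω)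
      = A2.indicator Y := by
    funext ω
    by_cases h : X ω = -q <;>
      simp [Set.indicator_apply, h, hA2X]
  have hφint : Integrable (fun ω => ({1} : Set ℝ).indicator (fun _ => (1 : ℝ)) (J ω)) μ := by
    rw [hφJ]
    exact (integrable_const (1 : ℝ)).indicator hmB
  have hψint : Integrable
      (fun ω => ({-q} : Set ℝ).indicator (fun _ => (1 : ℝ)) (X ω) * Y ω) μ := by
    rw [hψW]
    exact hYint.indicator hmA2
  have hprod := hind2.integral_mul_eq_mul_integral hφint.aestronglyMeasurable hψint.aestronglyMeasurable
  have hfun : (fun ω => ({1} : Set ℝ).indicator (fun _ => (1 : ℝ)) (J ω)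
        * (({-q} : Set ℝ).indicator (fun _ => (1 : ℝ)) (X ω) * Y ω))
      = (A2 ∩ B).indicator Y := by
    funext ω
    by_cases h1 : J ω = 1 <;> by_cases h2 : X ω = -q <;>
      simp [Set.indicator_apply, h1, h2, hA2X, hBdef, mem_inter_iff]
  have hB_int : ∫ ω, ({1} : Set ℝ).indicator (fun _ => (1 : ℝ)) (J ω) ∂μ = pα := by
    rw [hφJ, integral_indicator hmB, setIntegral_const, measureReal_def, smul_eq_mul, mul_one, hJ1,
      ENNReal.toReal_ofReal hpα_nonneg]
  have hX2_int : ∫ ω, ({-q} : Set ℝ).indicator (fun _ => (1 : ℝ)) (X ω) * Y ω ∂μ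
      = ∫ ω in A2, Y ω ∂μ := by
    rw [hψW, integral_indicator hmA2]
  have hEA2B : ∫ ω in A2 ∩ B, Y ω ∂μ = pα * (g (-q) * (μ A2).toReal) := by
    rw [← integral_indicator (hmA2.inter hmB), ← hfun]
    calc ∫ ω, ({1} : Set ℝ).indicator (fun _ => (1 : ℝ)) (J ω)
          * (({-q} : Set ℝ).indicator (fun _ => (1 : ℝ)) (X ω) * Y ω) ∂μ
        = (∫ ω, ({1} : Set ℝ).indicator (fun _ => (1 : ℝ)) (J ω) ∂μ)
          * ∫ ω, ({-q} : Set ℝ).indicator (fun _ => (1 : ℝ)) (X ω) * Y ω ∂μ := hprod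
      _ = pα * (g (-q) * (μ A2).toReal) := by rw [hB_int, hX2_int, hIntA2]
  -- numerator
  have hNum : ∫ ω in A1 ∪ A2 ∩ B, Y ω ∂μ
      = (∫ ω in A1, g (X ω) ∂μ) + g (-q) * (F - α) := by
    rw [setIntegral_union hdisjE (hmA2.inter hmB) hYint.integrableOn hYint.integrableOn,
      hIntA1, hEA2B]
    have : pα * (g (-q) * (μ A2).toReal) = g (-q) * (F - α) := by
      rw [← hkey]; ring
    rw [this]
  -- the quantile function on (0,1)
  have hQα : quantile μ (fun ω => - X ω) α = q := hq.symm
  have hQconst : ∀ u ∈ Ioo α 1 ∩ Iic F, quantile μ (fun ω => - X ω) u = q := by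
    rintro u ⟨⟨hu1, hu2⟩, hu3⟩
    have hu0 : (0 : ℝ) < u := lt_trans hα0 hu1
    have hle : quantile μ (fun ω => - X ω) u ≤ q := by
      refine (quantile_le_iff (μ := μ) (Z := fun ω => - X ω) hX.neg hu0 hu2).2 ?_
      rw [hFofReal]
      exact ENNReal.ofReal_le_ofReal hu3
    have hge : q ≤ quantile μ (fun ω => - X ω) u := by
      rw [← hQα]
      exact quantile_monotoneOn (μ := μ) hX.neg ⟨hα0, hα1⟩ ⟨hu0, hu2⟩ hu1.le
    exact le_antisymm hle hge
  have hQgt : ∀ u ∈ Ioo (0 : ℝ) 1, F < u → q < quantile μ (fun ω => - X ω) u := by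
    rintro u ⟨hu0, hu2⟩ hFu
    by_contra hle
    push_neg at hle
    have := (quantile_le_iff (μ := μ) (Z := fun ω => - X ω) hX.neg hu0 hu2).1 hle
    rw [hFofReal] at this
    have := ENNReal.ofReal_le_ofReal_iff (by linarith : (0:ℝ) ≤ F) |>.1 this
    linarith
  -- split the interval
  have hsplitI : Ioo α 1 = (Ioo α 1 ∩ Iic F) ∪ Ioo F 1 := by
    ext u
    constructor
    · intro hu
      rcases le_or_gt u F with h | h
      · exact Or.inl ⟨hu, h⟩
      · exact Or.inr ⟨h, hu.2⟩
    · rintro (⟨hu, _⟩ | hu)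
      · exact hu
      · exact ⟨lt_of_le_of_lt hαF hu.1, hu.2⟩
  have hdisjI : Disjoint (Ioo α 1 ∩ Iic F) (Ioo F 1) := by
    rw [disjoint_left]
    rintro u ⟨_, hu2⟩ hu3
    exact absurd hu3.1 (not_lt.2 hu2)
  have hIoo01 : Ioo F 1 ⊆ Ioo (0 : ℝ) 1 := fun u hu =>
    ⟨lt_of_le_of_lt (by linarith : (0:ℝ) ≤ F) hu.1, hu.2⟩
  -- first piece
  have hvolI : (volume (Ioo α 1 ∩ Iic F)).toReal = F - α := by
    rcases lt_or_ge F 1 with h1 | h1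
    · have heq : Ioo α 1 ∩ Iic F = Ioc α F := by
        ext u
        simp only [mem_inter_iff, mem_Ioo, mem_Iic, mem_Ioc]
        constructor
        · rintro ⟨⟨ha, _⟩, hb⟩; exact ⟨ha, hb⟩
        · rintro ⟨ha, hb⟩; exact ⟨⟨ha, lt_of_le_of_lt hb h1⟩, hb⟩
      rw [heq, Real.volume_Ioc, ENNReal.toReal_ofReal (by linarith)]
    · have hF1' : F = 1 := le_antisymm hF1 h1
      have heq : Ioo α 1 ∩ Iic F = Ioo α 1 := by
        rw [inter_eq_self_of_subset_left]
        intro u hu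
        exact le_of_lt (hF1' ▸ hu.2)
      rw [heq, Real.volume_Ioo, ENNReal.toReal_ofReal (by linarith), hF1']
  have hconstI : ∀ u ∈ Ioo α 1 ∩ Iic F, g (- VaR μ X u) = g (-q) := by
    intro u hu
    have : VaR μ X u = q := hQconst u hu
    rw [this]
  have hI1 : ∫ u in Ioo α 1 ∩ Iic F, g (- VaR μ X u) = g (-q) * (F - α) := by
    rw [setIntegral_congr_fun (measurableSet_Ioo.inter measurableSet_Iic) hconstI,
      setIntegral_const, measureReal_def, smul_eq_mul, hvolI, mul_comm]
  -- second piece via the quantile transform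
  have hmeas_h : Measurable ((Ioi q).indicator fun z : ℝ => g (-z)) :=
    (hg.comp measurable_neg).indicator measurableSet_Ioi
  have heq2 : ∀ u ∈ Ioo (0 : ℝ) 1,
      (Ioi q).indicator (fun z : ℝ => g (-z)) (quantile μ (fun ω => - X ω) u)
        = (Ioo F 1).indicator (fun u => g (- VaR μ X u)) u := by
    intro u hu
    by_cases hle : u ≤ F
    · have h1 : quantile μ (fun ω => - X ω) u ≤ q := by
        refine (quantile_le_iff (μ := μ) (Z := fun ω => - X ω) hX.neg hu.1 hu.2).2 ?_
        rw [hFofReal]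
        exact ENNReal.ofReal_le_ofReal hle
      have h2 : u ∉ Ioo F 1 := fun h => absurd h.1 (not_lt.2 hle)
      rw [indicator_of_notMem (by simpa using not_lt.2 h1), indicator_of_notMem h2]
    · push_neg at hle
      have h1 : q < quantile μ (fun ω => - X ω) u := hQgt u hu hle
      have h2 : u ∈ Ioo F 1 := ⟨hle, hu.2⟩
      rw [indicator_of_mem (by simpa using h1), indicator_of_mem h2]
      rfl
  have hindicator_eq : (fun ω => (Ioi q).indicator (fun z : ℝ => g (-z)) (- X ω))
      = A1.indicator fun ω => g (X ω) := by
    funext ω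
    by_cases h : q < - X ω <;>
      simp [Set.indicator_apply, h, hA1def, neg_neg]
  have hintcomp : Integrable
      (fun ω => (Ioi q).indicator (fun z : ℝ => g (-z)) (- X ω)) μ := by
    rw [hindicator_eq]
    exact hgXint.indicator hmA1
  have hint_map : Integrable ((Ioi q).indicator fun z : ℝ => g (-z))
      (μ.map fun ω => - X ω) :=
    (integrable_map_measure hmeas_h.aestronglyMeasurable hX.neg.aemeasurable).2 hintcomp
  have hint_mapQ : Integrable ((Ioi q).indicator fun z : ℝ => g (-z))
      ((volume.restrict (Ioo (0 : ℝ) 1)).map fun u => quantile μ (fun ω => - X ω) u) := by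
    rw [quantile_map (μ := μ) (Z := fun ω => - X ω) hX.neg]
    exact hint_map
  have hintQ : IntegrableOn
      (fun u => (Ioi q).indicator (fun z : ℝ => g (-z)) (quantile μ (fun ω => - X ω) u))
      (Ioo (0 : ℝ) 1) volume :=
    (integrable_map_measure hmeas_h.aestronglyMeasurable
      (quantile_aemeasurable (μ := μ) hX.neg)).1 hint_mapQ
  have hInt2 : IntegrableOn (fun u => g (- VaR μ X u)) (Ioo F 1) volume := by
    refine (hintQ.mono_set hIoo01).congr ?_
    refine (ae_restrict_iff' measurableSet_Ioo).2 (Eventually.of_forall fun u hu => ?_)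
    have h := heq2 u (hIoo01 hu)
    rw [indicator_of_mem hu] at h
    exact h
  have hInt1 : IntegrableOn (fun u => g (- VaR μ X u)) (Ioo α 1 ∩ Iic F) volume := by
    have hc : IntegrableOn (fun _ : ℝ => g (-q)) (Ioo α 1 ∩ Iic F) volume := by
      refine integrableOn_const (ne_of_lt ?_)
      refine lt_of_le_of_lt (measure_mono inter_subset_left) ?_
      rw [Real.volume_Ioo]
      exact ENNReal.ofReal_lt_top
    refine hc.congr ?_
    refine (ae_restrict_iff' (measurableSet_Ioo.inter measurableSet_Iic)).2
      (Eventually.of_forall fun u hu => ?_)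
    exact (hconstI u hu).symm
  have hI2 : ∫ u in Ioo F 1, g (- VaR μ X u) = ∫ ω in A1, g (X ω) ∂μ := by
    calc ∫ u in Ioo F 1, g (- VaR μ X u)
        = ∫ u in Ioo (0 : ℝ) 1, (Ioo F 1).indicator (fun u => g (- VaR μ X u)) u := by
          rw [setIntegral_indicator measurableSet_Ioo,
            inter_eq_self_of_subset_right hIoo01]
      _ = ∫ u in Ioo (0 : ℝ) 1,
            (Ioi q).indicator (fun z : ℝ => g (-z)) (quantile μ (fun ω => - X ω) u) :=
          (setIntegral_congr_fun measurableSet_Ioo fun u hu => heq2 u hu).symm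
      _ = ∫ z, (Ioi q).indicator (fun z : ℝ => g (-z)) z
            ∂((volume.restrict (Ioo (0 : ℝ) 1)).map fun u => quantile μ (fun ω => - X ω) u) :=
          (integral_map (quantile_aemeasurable (μ := μ) hX.neg)
            hmeas_h.aestronglyMeasurable).symm
      _ = ∫ z, (Ioi q).indicator (fun z : ℝ => g (-z)) z ∂(μ.map fun ω => - X ω) := by
          rw [quantile_map (μ := μ) (Z := fun ω => - X ω) hX.neg]
      _ = ∫ ω, (Ioi q).indicator (fun z : ℝ => g (-z)) (- X ω) ∂μ :=
          integral_map hX.neg.aemeasurable hmeas_h.aestronglyMeasurable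
      _ = ∫ ω, A1.indicator (fun ω => g (X ω)) ω ∂μ := by rw [hindicator_eq]
      _ = ∫ ω in A1, g (X ω) ∂μ := integral_indicator hmA1
  have hRHS : ∫ u in Ioo α 1, g (- VaR μ X u)
      = g (-q) * (F - α) + ∫ ω in A1, g (X ω) ∂μ := by
    rw [hsplitI, setIntegral_union hdisjI measurableSet_Ioo hInt1 hInt2, hI1, hI2]
  refine ⟨hP1, ?_⟩
  rw [hP1, hNum, hRHS, ENNReal.toReal_ofReal (by linarith)]
  rw [div_eq_mul_inv]
  ring
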